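/- arXiv:2309.00979 — 3 statements merged into one kernel-verified Lean document; each statement's English description precedes it below -/
import Mathlib

section
/- For any real numbers λ ≥ 0 and μ₁, μ₂, μ₃ ∈ [0, 2], the quantity c = (−λ²(μ₁μ₂ + μ₁μ₃ + μ₂μ₃) − λ³μ₁μ₂μ₃) / ((1+λμ₁)(1+λμ₂)(1+λμ₃)) satisfies |c| ≤ 1. -/
theorem stmt_0 (lam mu1 mu2 mu3 : ℝ) (hlam : 0 ≤ lam)
    (h1 : mu1 ∈ Set.Icc (0:ℝ) 2) (h2 : mu2 ∈ Set.Icc (0:ℝ) 2)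
    (h3 : mu3 ∈ Set.Icc (0:ℝ) 2) :
    |(-lam^2 * (mu1*mu2 + mu1*mu3 + mu2*mu3) - lam^3 * (mu1*mu2*mu3)) /
      ((1 + lam*mu1) * (1 + lam*mu2) * (1 + lam*mu3))| ≤ 1 := by
  obtain ⟨a1, b1⟩ := h1
  obtain ⟨a2, b2⟩ := h2
  obtain ⟨a3, b3⟩ := h3
  have hd : 0 < (1 + lam*mu1) * (1 + lam*mu2) * (1 + lam*mu3) := by positivity
  rw [abs_div, abs_of_pos hd, div_le_one hd, abs_le]
  constructor <;> nlinarith [mul_nonneg hlam a1, mul_nonneg hlam a2, mul_nonneg hlam a3,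
    mul_nonneg (mul_nonneg hlam a1) (mul_nonneg hlam a2),
    mul_nonneg (mul_nonneg hlam a2) (mul_nonneg hlam a3),
    mul_nonneg (mul_nonneg hlam a1) (mul_nonneg hlam a3),
    mul_nonneg (mul_nonneg (mul_nonneg hlam a1) (mul_nonneg hlam a2)) (mul_nonneg hlam a3)]
end

section
/- Let κ > 0 and let G(y,x) be the Dirichlet Green's function of ∂_yy − κ² on [0,1]. For fixed 0 < a < b < 1, real data g_a, g_b, and continuous f on [a,b], suppose u(x) = ∂_y G(b,x) φ_b − ∂_y G(a,x) φ_a + ∫_a^b G(y,x) f(y) dy for constants φ_a, φ_b. If u(a+) = g_a and u(b−) = g_b, then (φ_a, φ_b) solves the 2×2 linear system ½ φ(x) + (∂_y G(b,x) φ_b − ∂_y G(a,x) φ_a) = g(x) − ∫_a^b G(y,x) f(y) dy for x ∈ {a, b}, where φ(a) = φ_a, φ(b) = φ_b, g(a) = g_a, g(b) = g_b. -/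
/-- Green's function of ∂_yy − κ² on [0,1] with homogeneous Dirichlet BCs. -/
noncomputable def G8 (kappa y x : ℝ) : ℝ :=
  -(Real.sinh (kappa * min x y) * Real.sinh (kappa * (1 - max x y))) /
    (kappa * Real.sinh kappa)

/-- ∂_y G(y,x): one-sided expressions off the diagonal, principal value
(average of the one-sided limits) on the diagonal y = x. -/
noncomputable def G8y (kappa y x : ℝ) : ℝ :=
  if y < x then -(Real.cosh (kappa * y) * Real.sinh (kappa * (1 - x))) / Real.sinh kappa
  else if x < y then (Real.sinh (kappa * x) * Real.cosh (kappa * (1 - y))) / Real.sinh kappa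
  else (-(Real.cosh (kappa * y) * Real.sinh (kappa * (1 - x)))
        + Real.sinh (kappa * x) * Real.cosh (kappa * (1 - y))) / (2 * Real.sinh kappa)

theorem stmt_8 (kappa a b ga gb phia phib : ℝ) (f : ℝ → ℝ)
    (hk : 0 < kappa) (ha : 0 < a) (hab : a < b) (hb : b < 1)
    (hf : ContinuousOn f (Set.Icc a b))
    (u : ℝ → ℝ)
    (hu : ∀ x, u x = G8y kappa b x * phib - G8y kappa a x * phia
        + ∫ y in a..b, G8 kappa y x * f y)
    (hua : Filter.Tendsto u (nhdsWithin a (Set.Ioi a)) (nhds ga))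
    (hub : Filter.Tendsto u (nhdsWithin b (Set.Iio b)) (nhds gb)) :
    ((1/2) * phia + (G8y kappa b a * phib - G8y kappa a a * phia)
        = ga - ∫ y in a..b, G8 kappa y a * f y) ∧
    ((1/2) * phib + (G8y kappa b b * phib - G8y kappa a b * phia)
        = gb - ∫ y in a..b, G8 kappa y b * f y) := by
  have hs : Real.sinh kappa ≠ 0 := Real.sinh_ne_zero.2 (ne_of_gt hk)
  -- continuous extension of f
  obtain ⟨g, hg⟩ := ContinuousMap.exists_restrict_eq (s := Set.Icc a b) isClosed_Icc
    ⟨Set.restrict _ f, hf.restrict⟩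
  have hgf : Set.EqOn (⇑g) f (Set.Icc a b) := by
    intro x hx
    have := congrArg (fun h => h ⟨x, hx⟩) hg
    exact this
  -- the integral with f equals the integral with g
  have hint : ∀ x, (∫ y in a..b, G8 kappa y x * f y) = ∫ y in a..b, G8 kappa y x * g y := by
    intro x
    apply intervalIntegral.integral_congr
    intro y hy
    rw [Set.uIcc_of_le hab.le] at hy
    simp only [hgf hy]
  set I : ℝ → ℝ := fun x => ∫ y in a..b, G8 kappa y x * g y with hI
  have hcont : Continuous (Function.uncurry fun x y => G8 kappa y x * g y) := by
    unfold G8 Function.uncurry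
    fun_prop
  have hIc : Continuous I :=
    intervalIntegral.continuous_parametric_intervalIntegral_of_continuous' hcont a b
  set w : ℝ → ℝ := fun x =>
    Real.sinh (kappa * x) * Real.cosh (kappa * (1 - b)) / Real.sinh kappa * phib
    + Real.cosh (kappa * a) * Real.sinh (kappa * (1 - x)) / Real.sinh kappa * phia
    + I x with hw
  have hwc : Continuous w := by fun_prop
  have huw : ∀ x ∈ Set.Ioo a b, u x = w x := by
    intro x hx
    rw [hu, hint]
    unfold G8y
    rw [if_neg (not_lt.2 hx.2.le), if_pos hx.2, if_pos hx.1]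
    simp only [hw]
    ring
  have hIooa : Set.Ioo a b ∈ nhdsWithin a (Set.Ioi a) := Ioo_mem_nhdsGT_of_mem ⟨le_refl a, hab⟩
  have hIoob : Set.Ioo a b ∈ nhdsWithin b (Set.Iio b) := Ioo_mem_nhdsLT_of_mem ⟨hab, le_refl b⟩
  have hga : ga = w a := by
    have h1 : Filter.Tendsto u (nhdsWithin a (Set.Ioi a)) (nhds (w a)) := by
      refine Filter.Tendsto.congr' ?_ ((hwc.tendsto a).mono_left nhdsWithin_le_nhds)
      exact Filter.eventuallyEq_of_mem hIooa (fun x hx => (huw x hx).symm)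
    exact tendsto_nhds_unique hua h1
  have hgb : gb = w b := by
    have h1 : Filter.Tendsto u (nhdsWithin b (Set.Iio b)) (nhds (w b)) := by
      refine Filter.Tendsto.congr' ?_ ((hwc.tendsto b).mono_left nhdsWithin_le_nhds)
      exact Filter.eventuallyEq_of_mem hIoob (fun x hx => (huw x hx).symm)
    exact tendsto_nhds_unique hub h1
  have hSa : Real.sinh (kappa * a) * Real.cosh (kappa * (1 - a))
      + Real.cosh (kappa * a) * Real.sinh (kappa * (1 - a)) = Real.sinh kappa := by
    rw [← Real.sinh_add]; ring_nf
  have hSb : Real.sinh (kappa * b) * Real.cosh (kappa * (1 - b))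
      + Real.cosh (kappa * b) * Real.sinh (kappa * (1 - b)) = Real.sinh kappa := by
    rw [← Real.sinh_add]; ring_nf
  have hGba : G8y kappa b a = Real.sinh (kappa * a) * Real.cosh (kappa * (1 - b)) / Real.sinh kappa := by
    unfold G8y; rw [if_neg (not_lt.2 hab.le), if_pos hab]
  have hGaa : G8y kappa a a = (-(Real.cosh (kappa * a) * Real.sinh (kappa * (1 - a)))
      + Real.sinh (kappa * a) * Real.cosh (kappa * (1 - a))) / (2 * Real.sinh kappa) := by
    unfold G8y; rw [if_neg (lt_irrefl a), if_neg (lt_irrefl a)]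
  have hGbb : G8y kappa b b = (-(Real.cosh (kappa * b) * Real.sinh (kappa * (1 - b)))
      + Real.sinh (kappa * b) * Real.cosh (kappa * (1 - b))) / (2 * Real.sinh kappa) := by
    unfold G8y; rw [if_neg (lt_irrefl b), if_neg (lt_irrefl b)]
  have hGab : G8y kappa a b = -(Real.cosh (kappa * a) * Real.sinh (kappa * (1 - b))) / Real.sinh kappa := by
    unfold G8y; rw [if_pos hab]
  constructor
  · rw [hint, hga, hGba, hGaa, hw]
    field_simp
    linear_combination (-phia) * hSa
  · rw [hint, hgb, hGbb, hGab, hw]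
    field_simp
    linear_combination (-phib) * hSb
end

section
/- Let v be a function on [0,1], smooth on [0,a], [a,b], [b,1] with 0 < a < b < 1 and satisfying the jump conditions [v](a) = [v'](a) = 0, [v''](a) = J at x = a. Let x_{i-1} < a ≤ x_i < x_{i+1} be uniform grid points with spacing h. Then the corrected central difference (v(x_{i+1}) − 2v(x_i) + v(x_{i-1}))/h² differs from v''(x_i) (one-sided value from the right of a) by (a − x_{i-1})²J/(2h²) + O(h), assuming v is three times continuously differentiable on each side with bounded third derivatives. -/
open Set



private lemma iterSub {f g : ℝ → ℝ} (hf : ContDiff ℝ 3 f) (hg : ContDiff ℝ 3 g) (x : ℝ) :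
    iteratedDeriv 3 (fun t => f t - g t) x = iteratedDeriv 3 f x - iteratedDeriv 3 g x := by
  have hf' : ContDiff ℝ (3:ℕ) f := by exact_mod_cast hf
  have hg' : ContDiff ℝ (3:ℕ) (fun t => -g t) := by exact_mod_cast hg.neg
  simp only [sub_eq_add_neg, iteratedDeriv_eq_iteratedFDeriv]
  rw [show (fun t => f t + -g t) = (f + fun t => -g t) from rfl, iteratedFDeriv_add_apply hf'.contDiffAt hg'.contDiffAt]
  have : iteratedFDeriv ℝ 3 (fun t => -g t) x = -(iteratedFDeriv ℝ 3 g x) :=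
    iteratedFDeriv_neg_apply
  rw [this]
  simp


private lemma iterW {f : ℝ → ℝ} (hf : ContDiff ℝ 3 f) {s : Set ℝ} (hs : UniqueDiffOn ℝ s)
    {m : ℕ} (hm : (m : ℕ∞) ≤ 3) {x : ℝ} (hx : x ∈ s) :
    iteratedDerivWithin m f s x = iteratedDeriv m f x := by
  rw [iteratedDerivWithin_eq_iteratedFDerivWithin, iteratedDeriv_eq_iteratedFDeriv]
  rw [← ((contDiff_iff_ftaylorSeries.mp hf).hasFTaylorSeriesUpToOn s).eq_iteratedFDerivWithin_of_uniqueDiffOn (by exact_mod_cast hm) hs hx]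
  rfl

private lemma taylor2_right {f : ℝ → ℝ} (hf : ContDiff ℝ 3 f) {M : ℝ}
    (hb : ∀ x, |iteratedDeriv 3 f x| ≤ M) (x₀ x : ℝ) (hx : x₀ ≤ x) :
    |f x - f x₀ - deriv f x₀ * (x - x₀) - deriv (deriv f) x₀ * (x - x₀)^2 / 2|
      ≤ M * (x - x₀)^3 := by
  have hM : 0 ≤ M := le_trans (abs_nonneg _) (hb 0)
  rcases eq_or_lt_of_le hx with rfl | hlt
  · simp
  have hud : UniqueDiffOn ℝ (Icc x₀ x) := uniqueDiffOn_Icc hlt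
  have hmem : x₀ ∈ Icc x₀ x := left_mem_Icc.2 hx
  have h1 : iteratedDerivWithin 1 f (Icc x₀ x) x₀ = deriv f x₀ := by
    rw [iterW hf hud (by norm_num) hmem, iteratedDeriv_one]
  have h2 : iteratedDerivWithin 2 f (Icc x₀ x) x₀ = deriv (deriv f) x₀ := by
    rw [iterW hf hud (by norm_num) hmem]
    simp [iteratedDeriv_succ, iteratedDeriv_zero]
  have key := taylor_mean_remainder_bound (n := 2) hx hf.contDiffOn (right_mem_Icc.2 hx)
    (fun y hy => by rw [Real.norm_eq_abs, iterW hf hud le_rfl hy]; exact hb y)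
  have ht : taylorWithinEval f 2 (Icc x₀ x) x₀ x
      = f x₀ + deriv f x₀ * (x - x₀) + deriv (deriv f) x₀ * (x - x₀)^2 / 2 := by
    simp only [taylorWithinEval_succ, taylor_within_zero_eval, h1, h2]
    norm_num
    ring
  rw [Real.norm_eq_abs, ht] at key
  have hle : M * (x - x₀)^(2+1) / (Nat.factorial 2 : ℝ) ≤ M * (x - x₀)^3 := by
    norm_num [Nat.factorial]
    nlinarith [pow_nonneg (sub_nonneg.2 hx) 3]
  have heq : f x - f x₀ - deriv f x₀ * (x - x₀) - deriv (deriv f) x₀ * (x - x₀)^2 / 2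
      = f x - (f x₀ + deriv f x₀ * (x - x₀) + deriv (deriv f) x₀ * (x - x₀)^2 / 2) := by ring
  rw [heq]
  exact le_trans key hle

private lemma taylor2 {f : ℝ → ℝ} (hf : ContDiff ℝ 3 f) {M : ℝ}
    (hb : ∀ x, |iteratedDeriv 3 f x| ≤ M) (x₀ x : ℝ) :
    |f x - f x₀ - deriv f x₀ * (x - x₀) - deriv (deriv f) x₀ * (x - x₀)^2 / 2|
      ≤ M * |x - x₀|^3 := by
  rcases le_total x₀ x with hx | hx
  · rw [abs_of_nonneg (sub_nonneg.2 hx)]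
    exact taylor2_right hf hb x₀ x hx
  · set g : ℝ → ℝ := fun t => f (2*x₀ - t) with hgdef
    have hg : ContDiff ℝ 3 g := hf.comp (contDiff_const.sub contDiff_id)
    have hgiter : ∀ n t, iteratedDeriv n g t = (-1:ℝ)^n • iteratedDeriv n f (2*x₀ - t) := by
      intro n t
      set F : ℝ → ℝ := fun s => f (2*x₀ + s) with hF
      have hgg : g = fun u => F (-u) := by
        funext u; simp [hgdef, hF, sub_eq_add_neg]
      rw [hgg, iteratedDeriv_comp_neg n F, hF, iteratedDeriv_comp_const_add]
      norm_num [sub_eq_add_neg]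
    have hbg : ∀ t, |iteratedDeriv 3 g t| ≤ M := by
      intro t
      rw [hgiter]
      simp only [smul_eq_mul, abs_mul, abs_pow, abs_neg, abs_one, one_pow, one_mul]
      exact hb (2*x₀ - t)
    have hd1 : deriv g x₀ = - deriv f x₀ := by
      have := hgiter 1 x₀
      rw [show 2*x₀ - x₀ = x₀ by ring] at this
      simpa [iteratedDeriv_one] using this
    have hd2 : deriv (deriv g) x₀ = deriv (deriv f) x₀ := by
      have := hgiter 2 x₀
      rw [show 2*x₀ - x₀ = x₀ by ring] at this
      simp only [iteratedDeriv_succ, iteratedDeriv_zero] at this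
      simpa using this
    have key := taylor2_right hg hbg x₀ (2*x₀ - x) (by linarith)
    have hgx : g (2*x₀ - x) = f x := by simp [hgdef]
    have hgx0 : g x₀ = f x₀ := by simp [hgdef]; ring_nf
    rw [hgx, hgx0, hd1, hd2] at key
    have habs : |x - x₀| = x₀ - x := by rw [abs_sub_comm, abs_of_nonneg (by linarith)]
    rw [habs]
    calc |f x - f x₀ - deriv f x₀ * (x - x₀) - deriv (deriv f) x₀ * (x - x₀)^2 / 2|
        = |f x - f x₀ - -deriv f x₀ * (2*x₀ - x - x₀) - deriv (deriv f) x₀ * (2*x₀ - x - x₀)^2 / 2| := by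
          congr 1; ring
      _ ≤ M * (2*x₀ - x - x₀)^3 := key
      _ = M * (x₀ - x)^3 := by ring_nf

private lemma d2lip {f : ℝ → ℝ} (hf : ContDiff ℝ 3 f) {M : ℝ}
    (hb : ∀ x, |iteratedDeriv 3 f x| ≤ M) (x y : ℝ) :
    |deriv (deriv f) y - deriv (deriv f) x| ≤ M * |y - x| := by
  have hdiff : Differentiable ℝ (deriv (deriv f)) := by
    have h2 : ContDiff ℝ 1 (deriv^[2] f) := hf.iterate_deriv' 1 2
    simpa [Function.iterate_succ, Function.comp] using h2.differentiable one_ne_zero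
  have hder : ∀ t, deriv (deriv (deriv f)) t = iteratedDeriv 3 f t := by
    intro t
    simp [iteratedDeriv_succ, iteratedDeriv_zero]
  have := Convex.norm_image_sub_le_of_norm_hasDerivWithin_le
    (f := deriv (deriv f)) (f' := fun t => iteratedDeriv 3 f t) (s := univ) (C := M)
    (fun t _ => by
      have h := (hdiff t).hasDerivAt
      rw [hder t] at h
      exact h.hasDerivWithinAt)
    (fun t _ => by rw [Real.norm_eq_abs]; exact hb t)
    convex_univ (mem_univ x) (mem_univ y)
  simpa [Real.norm_eq_abs] using this

theorem stmt_10 (a J M : ℝ) (hM : 0 ≤ M) (vL vR v : ℝ → ℝ)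
    (hvL : ContDiff ℝ 3 vL) (hvR : ContDiff ℝ 3 vR)
    (hbL : ∀ x, |iteratedDeriv 3 vL x| ≤ M)
    (hbR : ∀ x, |iteratedDeriv 3 vR x| ≤ M)
    (hv : ∀ x, v x = if x < a then vL x else vR x)
    (hj0 : vL a = vR a)                                -- [v](a) = 0
    (hj1 : deriv vL a = deriv vR a)                    -- [v'](a) = 0
    (hj2 : deriv (deriv vL) a - deriv (deriv vR) a = J) -- [v''](a) = J
    :
    ∃ C : ℝ, ∀ h : ℝ, 0 < h → ∀ xim1 : ℝ, xim1 < a → a ≤ xim1 + h →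
      |(v (xim1 + 2*h) - 2 * v (xim1 + h) + v xim1) / h^2
          - deriv (deriv vR) (xim1 + h)
          - (a - xim1)^2 * J / (2 * h^2)| ≤ C * h := by
  refine ⟨13 * M, ?_⟩
  intro h hh p hpa hap
  have hh2 : (0:ℝ) < h^2 := by positivity
  have hv1 : v p = vL p := by rw [hv]; simp [hpa]
  have hv2 : v (p + h) = vR (p + h) := by rw [hv, if_neg (not_lt.2 hap)]
  have hv3 : v (p + 2*h) = vR (p + 2*h) := by
    rw [hv, if_neg]; push_neg; linarith
  -- the jump function
  have hwC : ContDiff ℝ 3 (fun t => vL t - vR t) := hvL.sub hvR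
  have hbw : ∀ x, |iteratedDeriv 3 (fun t => vL t - vR t) x| ≤ M + M := by
    intro x
    rw [iterSub hvL hvR]
    exact (abs_sub _ _).trans (add_le_add (hbL x) (hbR x))
  have hdL : Differentiable ℝ vL := hvL.differentiable (by norm_num)
  have hdR : Differentiable ℝ vR := hvR.differentiable (by norm_num)
  have hCL : ContDiff ℝ 2 (deriv vL) := by
    have h3 : ContDiff ℝ ((2 + 1 : ℕ) : ℕ) vL := by exact_mod_cast hvL
    simpa using ContDiff.iterate_deriv' 2 1 h3
  have hCR : ContDiff ℝ 2 (deriv vR) := by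
    have h3 : ContDiff ℝ ((2 + 1 : ℕ) : ℕ) vR := by exact_mod_cast hvR
    simpa using ContDiff.iterate_deriv' 2 1 h3
  have hwa : (fun t => vL t - vR t) a = 0 := by simp [hj0]
  have hderw : deriv (fun t => vL t - vR t) = fun x => deriv vL x - deriv vR x :=
    funext fun x => deriv_sub (hdL x) (hdR x)
  have hw1 : deriv (fun t => vL t - vR t) a = 0 := by
    rw [hderw]; simp [hj1]
  have hw2 : deriv (deriv (fun t => vL t - vR t)) a = J := by
    rw [hderw, deriv_fun_sub (hCL.differentiable (by norm_num) a) (hCR.differentiable (by norm_num) a)]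
    exact hj2
  -- Taylor expansions
  have t1 := taylor2_right hvR hbR p (p + h) (by linarith)
  have t2 := taylor2_right hvR hbR p (p + 2*h) (by linarith)
  simp only [add_sub_cancel_left] at t1 t2
  have t3 := taylor2 hwC hbw a p
  rw [hw1, hw2, hj0] at t3
  simp only [sub_self, zero_mul, sub_zero] at t3
  have hpa3 : |p - a| ^ 3 ≤ h ^ 3 := by
    have h1 : |p - a| = a - p := by rw [abs_sub_comm, abs_of_nonneg (by linarith)]
    have h2 : |p - a| ≤ h := by rw [h1]; linarith
    exact pow_le_pow_left₀ (abs_nonneg _) h2 3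
  have t3' : |vL p - vR p - J * (p - a)^2 / 2| ≤ (M + M) * h^3 :=
    t3.trans (mul_le_mul_of_nonneg_left hpa3 (by linarith))
  have lip := d2lip hvR hbR p (p + h)
  rw [show p + h - p = h by ring, abs_of_pos hh] at lip
  -- algebraic identity
  have key : (v (p + 2*h) - 2 * v (p + h) + v p) / h^2
        - deriv (deriv vR) (p + h) - (a - p)^2 * J / (2 * h^2)
      = ((vR (p + 2*h) - vR p - deriv vR p * (2*h) - deriv (deriv vR) p * (2*h)^2 / 2)
          - 2 * (vR (p + h) - vR p - deriv vR p * h - deriv (deriv vR) p * h^2 / 2)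
          + ((vL p - vR p) - J * (p - a)^2 / 2)
          - (deriv (deriv vR) (p + h) - deriv (deriv vR) p) * h^2) / h^2 := by
    rw [hv1, hv2, hv3]
    field_simp
    ring
  rw [key, abs_div, abs_of_pos hh2, div_le_iff₀ hh2]
  obtain ⟨hA1, hA2⟩ := abs_le.1 t1
  obtain ⟨hB1, hB2⟩ := abs_le.1 t2
  obtain ⟨hW1, hW2⟩ := abs_le.1 t3'
  obtain ⟨hD1, hD2⟩ := abs_le.1 lip
  have hDm1 := mul_le_mul_of_nonneg_right hD2 hh2.le
  have hDm2 := mul_le_mul_of_nonneg_right hD1 hh2.le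
  have e1 : M*(2*h)^3 = 8*(M*h^3) := by ring
  have e2 : M*h*h^2 = M*h^3 := by ring
  have e3 : (M+M)*h^3 = 2*(M*h^3) := by ring
  have e4 : 13*M*h*h^2 = 13*(M*h^3) := by ring
  have e5 : -(M*h)*h^2 = -(M*h^3) := by ring
  rw [abs_le]
  constructor <;>
    linarith [hA1, hA2, hB1, hB2, hW1, hW2, hDm1, hDm2, e1, e2, e3, e4, e5]
end
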